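/- Let M be a triangulated category that is a module over a tensor triangulated category (K,⊗,1), and let 𝔉 = {F_i}_{i ∈ I} be a family of thick K-submodules of M with M ∈ 𝔉. Then the following are equivalent: (1) 𝔉 satisfies (a) for any nonempty subset J ⊆ I, the intersection ∩_{j ∈ J} F_j belongs to 𝔉, and (b) for any filtered directed collection {F_k}_{k ∈ K} of members of 𝔉, the union ∪_{k ∈ K} F_k belongs to 𝔉; (2) there exists a closure operator c : SMod(M) → SMod(M) of finite type such that 𝔉 is exactly the collection of fixed points of c. In particular, if (1) holds then 𝔉 is a spectral space with {U(m) ∩ 𝔉}_{m ∈ M} a basis of quasi-compact open sets. -/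

import Mathlib

open CategoryTheory CategoryTheory.Limits CategoryTheory.Pretriangulated
open CategoryTheory.MonoidalCategory ZeroObject

universe v u v' u'

/-- The data of the action of a tensor triangulated category `(K,⊗,1)` on a triangulated
category `M`, recorded on objects together with the unit and shift coherences that we use. -/
structure TTModuleStr (K : Type u) [Category.{v} K] [MonoidalCategory K] [HasShift K ℤ]
    (M : Type u') [Category.{v'} M] [HasShift M ℤ] where
  act : K → M → M
  act_unit : ∀ m : M, Nonempty (act (𝟙_ K) m ≅ m)
  act_unit_shift : ∀ m : M, Nonempty (act ((𝟙_ K)⟦(1 : ℤ)⟧) m ≅ m⟦(1 : ℤ)⟧)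
  act_unit_shift_neg : ∀ m : M, Nonempty (act ((𝟙_ K)⟦(-1 : ℤ)⟧) m ≅ m⟦(-1 : ℤ)⟧)

variable {K : Type u} [Category.{v} K] [MonoidalCategory K] [HasZeroObject K] [Preadditive K]
  [HasShift K ℤ] [∀ n : ℤ, (shiftFunctor K n).Additive] [Pretriangulated K]
variable {M : Type u'} [Category.{v'} M] [HasZeroObject M] [Preadditive M] [HasShift M ℤ]
  [∀ n : ℤ, (shiftFunctor M n).Additive] [Pretriangulated M] [HasBinaryBiproducts M]

/-- A thick `K`-submodule of `M`. -/
structure ThickSubmodule (A : TTModuleStr K M) where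
  carrier : Set M
  zero_mem : (0 : M) ∈ carrier
  act_mem : ∀ (a : K) (m : M), m ∈ carrier → A.act a m ∈ carrier
  biprod_mem_iff : ∀ m m' : M, (m ⊞ m') ∈ carrier ↔ (m ∈ carrier ∧ m' ∈ carrier)
  mem₃_of_dist : ∀ T : Triangle M, T ∈ (distTriang M) →
    T.obj₁ ∈ carrier → T.obj₂ ∈ carrier → T.obj₃ ∈ carrier
  mem₁_of_dist : ∀ T : Triangle M, T ∈ (distTriang M) →
    T.obj₂ ∈ carrier → T.obj₃ ∈ carrier → T.obj₁ ∈ carrier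
  mem₂_of_dist : ∀ T : Triangle M, T ∈ (distTriang M) →
    T.obj₁ ∈ carrier → T.obj₃ ∈ carrier → T.obj₂ ∈ carrier

variable (A : TTModuleStr K M)

instance : SetLike (ThickSubmodule A) M where
  coe N := N.carrier
  coe_injective := by intro N N' h; cases N; cases N'; congr

/-- `U(m) = { N ∈ SMod(M) | m ∈ N }`. -/
def U (m : M) : Set (ThickSubmodule A) := {N : ThickSubmodule A | m ∈ N.carrier}

/-- The topology on `SMod(M)` generated by the subbasis `{U(m)}_{m ∈ M}`. -/
instance : TopologicalSpace (ThickSubmodule A) :=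
  TopologicalSpace.generateFrom (Set.range (U A))

/-- The thick `K`-submodule of `M` generated by a set `X` of objects of `M`. -/
def genSub (X : Set M) : ThickSubmodule A where
  carrier := ⋂ (N : ThickSubmodule A) (_ : X ⊆ N.carrier), N.carrier
  zero_mem := by
    simp only [Set.mem_iInter]; intro N _; exact N.zero_mem
  act_mem := by
    intro a m hm
    simp only [Set.mem_iInter] at hm ⊢
    intro N hN
    exact N.act_mem a m (hm N hN)
  biprod_mem_iff := by
    intro m m'
    simp only [Set.mem_iInter]
    constructor
    · intro h
      exact ⟨fun N hN => ((N.biprod_mem_iff m m').1 (h N hN)).1,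
        fun N hN => ((N.biprod_mem_iff m m').1 (h N hN)).2⟩
    · rintro ⟨h1, h2⟩ N hN
      exact (N.biprod_mem_iff m m').2 ⟨h1 N hN, h2 N hN⟩
  mem₃_of_dist := by
    intro T hT h1 h2
    simp only [Set.mem_iInter] at h1 h2 ⊢
    intro N hN
    exact N.mem₃_of_dist T hT (h1 N hN) (h2 N hN)
  mem₁_of_dist := by
    intro T hT h1 h2
    simp only [Set.mem_iInter] at h1 h2 ⊢
    intro N hN
    exact N.mem₁_of_dist T hT (h1 N hN) (h2 N hN)
  mem₂_of_dist := by
    intro T hT h1 h2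
    simp only [Set.mem_iInter] at h1 h2 ⊢
    intro N hN
    exact N.mem₂_of_dist T hT (h1 N hN) (h2 N hN)

/-- The largest thick `K`-submodule: all of `M`. -/
def topSub : ThickSubmodule A where
  carrier := Set.univ
  zero_mem := trivial
  act_mem := fun _ _ _ => trivial
  biprod_mem_iff := fun _ _ => by simp
  mem₃_of_dist := fun _ _ _ _ => trivial
  mem₁_of_dist := fun _ _ _ _ => trivial
  mem₂_of_dist := fun _ _ _ _ => trivial

/-- An operator on `SMod(M)` is extensive if `N ⊆ c(N)` for all `N`. -/
def Extensive (c : ThickSubmodule A → ThickSubmodule A) : Prop :=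
  ∀ N : ThickSubmodule A, N.carrier ⊆ (c N).carrier

/-- An operator on `SMod(M)` is order-preserving if `N ⊆ N'` implies `c(N) ⊆ c(N')`. -/
def OrderPreserving (c : ThickSubmodule A → ThickSubmodule A) : Prop :=
  ∀ N N' : ThickSubmodule A, N.carrier ⊆ N'.carrier → (c N).carrier ⊆ (c N').carrier

/-- An operator on `SMod(M)` is idempotent if `c(c(N)) = c(N)` for all `N`. -/
def Idempotent (c : ThickSubmodule A → ThickSubmodule A) : Prop :=
  ∀ N : ThickSubmodule A, c (c N) = c N

/-- An operator on `SMod(M)` is of finite type if `c(N) = ⋃_{n ∈ N} c(K(n))`. -/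
def FiniteType (c : ThickSubmodule A → ThickSubmodule A) : Prop :=
  ∀ N : ThickSubmodule A,
    (c N).carrier = ⋃ n ∈ N.carrier, (c (genSub A {n})).carrier

/-- A topological space is spectral if it is quasi-compact, `T0`, sober, and its
quasi-compact open subsets form a basis that is closed under finite intersections. -/
def IsSpectralSpace (X : Type*) [TopologicalSpace X] : Prop :=
  CompactSpace X ∧ T0Space X ∧ QuasiSober X ∧
    TopologicalSpace.IsTopologicalBasis {s : Set X | IsOpen s ∧ IsCompact s} ∧
    ∀ s t : Set X, IsOpen s → IsCompact s → IsOpen t → IsCompact t → IsCompact (s ∩ t)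

set_option linter.unusedSectionVars false
section Aux

lemma tsm_ext {N N' : ThickSubmodule A} (h : N.carrier = N'.carrier) : N = N' := by
  cases N; cases N'; simpa using h

lemma subset_genSub (X : Set M) : X ⊆ (genSub A X).carrier := by
  intro x hx
  simp only [genSub, Set.mem_iInter]
  intro N hN
  exact hN hx

lemma genSub_subset {X : Set M} {N : ThickSubmodule A} (h : X ⊆ N.carrier) :
    (genSub A X).carrier ⊆ N.carrier := by
  intro x hx
  simp only [genSub, Set.mem_iInter] at hx
  exact hx N h

/-- Intersection of a family of thick submodules. -/
def interSub (G : Set (ThickSubmodule A)) : ThickSubmodule A where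
  carrier := ⋂ N ∈ G, ThickSubmodule.carrier N
  zero_mem := by
    simp only [Set.mem_iInter]; intro N _; exact N.zero_mem
  act_mem := by
    intro a m hm
    simp only [Set.mem_iInter] at hm ⊢
    intro N hN
    exact N.act_mem a m (hm N hN)
  biprod_mem_iff := by
    intro m m'
    simp only [Set.mem_iInter]
    constructor
    · intro h
      exact ⟨fun N hN => ((N.biprod_mem_iff m m').1 (h N hN)).1,
        fun N hN => ((N.biprod_mem_iff m m').1 (h N hN)).2⟩
    · rintro ⟨h1, h2⟩ N hN
      exact (N.biprod_mem_iff m m').2 ⟨h1 N hN, h2 N hN⟩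
  mem₃_of_dist := by
    intro T hT h1 h2
    simp only [Set.mem_iInter] at h1 h2 ⊢
    intro N hN
    exact N.mem₃_of_dist T hT (h1 N hN) (h2 N hN)
  mem₁_of_dist := by
    intro T hT h1 h2
    simp only [Set.mem_iInter] at h1 h2 ⊢
    intro N hN
    exact N.mem₁_of_dist T hT (h1 N hN) (h2 N hN)
  mem₂_of_dist := by
    intro T hT h1 h2
    simp only [Set.mem_iInter] at h1 h2 ⊢
    intro N hN
    exact N.mem₂_of_dist T hT (h1 N hN) (h2 N hN)

/-- Directed union of a nonempty family of thick submodules. -/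
def unionSub (G : Set (ThickSubmodule A)) (hne : G.Nonempty)
    (hdir : ∀ N₁ ∈ G, ∀ N₂ ∈ G, ∃ N₃ ∈ G,
      ThickSubmodule.carrier N₁ ⊆ ThickSubmodule.carrier N₃ ∧
      ThickSubmodule.carrier N₂ ⊆ ThickSubmodule.carrier N₃) : ThickSubmodule A where
  carrier := ⋃ N ∈ G, ThickSubmodule.carrier N
  zero_mem := by
    obtain ⟨N, hN⟩ := hne
    exact Set.mem_biUnion hN N.zero_mem
  act_mem := by
    intro a m hm
    obtain ⟨N, hN, hm⟩ := Set.mem_iUnion₂.1 hm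
    exact Set.mem_biUnion hN (N.act_mem a m hm)
  biprod_mem_iff := by
    intro m m'
    constructor
    · intro h
      obtain ⟨N, hN, h⟩ := Set.mem_iUnion₂.1 h
      obtain ⟨h1, h2⟩ := (N.biprod_mem_iff m m').1 h
      exact ⟨Set.mem_biUnion hN h1, Set.mem_biUnion hN h2⟩
    · rintro ⟨h1, h2⟩
      obtain ⟨N₁, hN₁, h1⟩ := Set.mem_iUnion₂.1 h1
      obtain ⟨N₂, hN₂, h2⟩ := Set.mem_iUnion₂.1 h2
      obtain ⟨N₃, hN₃, s1, s2⟩ := hdir N₁ hN₁ N₂ hN₂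
      exact Set.mem_biUnion hN₃ ((N₃.biprod_mem_iff m m').2 ⟨s1 h1, s2 h2⟩)
  mem₃_of_dist := by
    intro T hT h1 h2
    obtain ⟨N₁, hN₁, h1⟩ := Set.mem_iUnion₂.1 h1
    obtain ⟨N₂, hN₂, h2⟩ := Set.mem_iUnion₂.1 h2
    obtain ⟨N₃, hN₃, s1, s2⟩ := hdir N₁ hN₁ N₂ hN₂
    exact Set.mem_biUnion hN₃ (N₃.mem₃_of_dist T hT (s1 h1) (s2 h2))
  mem₁_of_dist := by
    intro T hT h1 h2
    obtain ⟨N₁, hN₁, h1⟩ := Set.mem_iUnion₂.1 h1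
    obtain ⟨N₂, hN₂, h2⟩ := Set.mem_iUnion₂.1 h2
    obtain ⟨N₃, hN₃, s1, s2⟩ := hdir N₁ hN₁ N₂ hN₂
    exact Set.mem_biUnion hN₃ (N₃.mem₁_of_dist T hT (s1 h1) (s2 h2))
  mem₂_of_dist := by
    intro T hT h1 h2
    obtain ⟨N₁, hN₁, h1⟩ := Set.mem_iUnion₂.1 h1
    obtain ⟨N₂, hN₂, h2⟩ := Set.mem_iUnion₂.1 h2
    obtain ⟨N₃, hN₃, s1, s2⟩ := hdir N₁ hN₁ N₂ hN₂
    exact Set.mem_biUnion hN₃ (N₃.mem₂_of_dist T hT (s1 h1) (s2 h2))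

/-- The closure operator associated to a family `𝔉`. -/
def cOp (𝔉 : Set (ThickSubmodule A)) (N : ThickSubmodule A) : ThickSubmodule A :=
  interSub A {F | F ∈ 𝔉 ∧ N.carrier ⊆ F.carrier}

lemma le_cOp (𝔉 : Set (ThickSubmodule A)) (N : ThickSubmodule A) :
    N.carrier ⊆ (cOp A 𝔉 N).carrier := by
  intro x hx
  simp only [cOp, interSub, Set.mem_iInter]
  rintro F ⟨-, hNF⟩
  exact hNF hx

lemma cOp_le {𝔉 : Set (ThickSubmodule A)} {N F : ThickSubmodule A} (hF : F ∈ 𝔉)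
    (h : N.carrier ⊆ F.carrier) : (cOp A 𝔉 N).carrier ⊆ F.carrier := by
  intro x hx
  simp only [cOp, interSub, Set.mem_iInter] at hx
  exact hx F ⟨hF, h⟩

lemma cOp_mono (𝔉 : Set (ThickSubmodule A)) {N N' : ThickSubmodule A}
    (h : N.carrier ⊆ N'.carrier) : (cOp A 𝔉 N).carrier ⊆ (cOp A 𝔉 N').carrier := by
  intro x hx
  simp only [cOp, interSub, Set.mem_iInter] at hx ⊢
  rintro F ⟨hF, hN'F⟩
  exact hx F ⟨hF, h.trans hN'F⟩

lemma cOp_mem (𝔉 : Set (ThickSubmodule A)) (hM : topSub A ∈ 𝔉)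
    (ha : ∀ G : Set (ThickSubmodule A), G ⊆ 𝔉 → G.Nonempty →
        ∃ F ∈ 𝔉, F.carrier = ⋂ N ∈ G, ThickSubmodule.carrier N)
    (N : ThickSubmodule A) : cOp A 𝔉 N ∈ 𝔉 := by
  obtain ⟨F, hF, hcar⟩ := ha {F | F ∈ 𝔉 ∧ N.carrier ⊆ F.carrier} (fun F hF => hF.1)
    ⟨topSub A, hM, fun x _ => trivial⟩
  have : cOp A 𝔉 N = F := tsm_ext A hcar.symm
  rw [this]
  exact hF

end Aux

section Topo

lemma mem_V {𝔉 : Set (ThickSubmodule A)} {m : M} {x : {N : ThickSubmodule A // N ∈ 𝔉}} :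
    x ∈ (Subtype.val ⁻¹' U A m : Set {N : ThickSubmodule A // N ∈ 𝔉}) ↔ m ∈ x.1.carrier :=
  Iff.rfl

lemma basis_lemma (𝔉 : Set (ThickSubmodule A)) :
    TopologicalSpace.IsTopologicalBasis
      (Set.range fun m : M =>
        (Subtype.val ⁻¹' U A m : Set {N : ThickSubmodule A // N ∈ 𝔉})) := by
  constructor
  · rintro _ ⟨m₁, rfl⟩ _ ⟨m₂, rfl⟩ x ⟨h1, h2⟩
    refine ⟨_, ⟨m₁ ⊞ m₂, rfl⟩, ?_, ?_⟩
    · exact (x.1.biprod_mem_iff m₁ m₂).2 ⟨h1, h2⟩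
    · intro y hy
      exact (y.1.biprod_mem_iff m₁ m₂).1 hy
  · apply Set.eq_univ_of_forall
    intro x
    exact Set.mem_sUnion.2 ⟨_, ⟨0, rfl⟩, x.1.zero_mem⟩
  · show TopologicalSpace.induced Subtype.val
        (TopologicalSpace.generateFrom (Set.range (U A))) = _
    rw [induced_generateFrom_eq, ← Set.range_comp]
    rfl

lemma compact_lemma (𝔉 : Set (ThickSubmodule A)) (hM : topSub A ∈ 𝔉)
    (ha : ∀ G : Set (ThickSubmodule A), G ⊆ 𝔉 → G.Nonempty →
        ∃ F ∈ 𝔉, F.carrier = ⋂ N ∈ G, ThickSubmodule.carrier N) (m : M) :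
    IsCompact (Subtype.val ⁻¹' U A m : Set {N : ThickSubmodule A // N ∈ 𝔉}) := by
  set Nm := cOp A 𝔉 (genSub A {m}) with hNm
  have hNm𝔉 : Nm ∈ 𝔉 := cOp_mem A 𝔉 hM ha _
  have hmNm : m ∈ Nm.carrier := le_cOp A 𝔉 _ (subset_genSub A {m} rfl)
  have key : ∀ N : {N : ThickSubmodule A // N ∈ 𝔉}, m ∈ N.1.carrier →
      Nm.carrier ⊆ N.1.carrier :=
    fun N h => cOp_le A N.2 (genSub_subset A (Set.singleton_subset_iff.2 h))
  apply isCompact_of_finite_subcover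
  intro ι Ucov hUopen hcover
  have hxm : (⟨Nm, hNm𝔉⟩ : {N : ThickSubmodule A // N ∈ 𝔉}) ∈ Subtype.val ⁻¹' U A m := hmNm
  obtain ⟨i₀, hi₀⟩ := Set.mem_iUnion.1 (hcover hxm)
  obtain ⟨v, ⟨m', rfl⟩, hxv, hvsub⟩ :=
    (basis_lemma A 𝔉).exists_subset_of_mem_open hi₀ (hUopen i₀)
  refine ⟨{i₀}, fun N hN => ?_⟩
  simp only [Finset.mem_singleton, Set.iUnion_iUnion_eq_left]
  exact hvsub (key N hN hxv)

end Topo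

lemma finrep_lemma (𝔉 : Set (ThickSubmodule A)) {s : Set {N : ThickSubmodule A // N ∈ 𝔉}}
    (ho : IsOpen s) (hc : IsCompact s) :
    ∃ L : Finset M,
      s = ⋃ m ∈ L, (Subtype.val ⁻¹' U A m : Set {N : ThickSubmodule A // N ∈ 𝔉}) := by
  classical
  have hcov : s ⊆ ⋃ i : {m : M //
      (Subtype.val ⁻¹' U A m : Set {N : ThickSubmodule A // N ∈ 𝔉}) ⊆ s},
      (Subtype.val ⁻¹' U A i.1 : Set {N : ThickSubmodule A // N ∈ 𝔉}) := by
    intro x hx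
    obtain ⟨v, ⟨m, rfl⟩, hxv, hvs⟩ := (basis_lemma A 𝔉).exists_subset_of_mem_open hx ho
    exact Set.mem_iUnion.2 ⟨⟨m, hvs⟩, hxv⟩
  obtain ⟨t, ht⟩ := hc.elim_finite_subcover
    (fun i : {m : M //
        (Subtype.val ⁻¹' U A m : Set {N : ThickSubmodule A // N ∈ 𝔉}) ⊆ s} =>
      (Subtype.val ⁻¹' U A i.1 : Set {N : ThickSubmodule A // N ∈ 𝔉}))
    (fun i => (basis_lemma A 𝔉).isOpen ⟨i.1, rfl⟩) hcov
  refine ⟨t.image Subtype.val, Set.Subset.antisymm ?_ ?_⟩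
  · intro x hx
    obtain ⟨i, hit, hxi⟩ := Set.mem_iUnion₂.1 (ht hx)
    exact Set.mem_biUnion (Finset.mem_image_of_mem _ hit) hxi
  · intro x hx
    obtain ⟨m, hm, hxm⟩ := Set.mem_iUnion₂.1 hx
    obtain ⟨i, _, rfl⟩ := Finset.mem_image.1 hm
    exact i.2 hxm

/-- Theorem 2.6: for a family `𝔉` of thick `K`-submodules of `M` with `M ∈ 𝔉`, closure
under nonempty intersections and filtered directed unions is equivalent to `𝔉` being the
set of fixed points of a closure operator of finite type; in particular, when this holds
`𝔉` is a spectral space with `{U(m) ∩ 𝔉}` a basis of quasi-compact opens. -/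
theorem statement9 (𝔉 : Set (ThickSubmodule A)) (hM : topSub A ∈ 𝔉) :
    (((∀ G : Set (ThickSubmodule A), G ⊆ 𝔉 → G.Nonempty →
        ∃ F ∈ 𝔉, F.carrier = ⋂ N ∈ G, ThickSubmodule.carrier N) ∧
      (∀ G : Set (ThickSubmodule A), G ⊆ 𝔉 → G.Nonempty →
        (∀ N₁ ∈ G, ∀ N₂ ∈ G, ∃ N₃ ∈ G,
          ThickSubmodule.carrier N₁ ⊆ ThickSubmodule.carrier N₃ ∧
          ThickSubmodule.carrier N₂ ⊆ ThickSubmodule.carrier N₃) →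
        ∃ F ∈ 𝔉, F.carrier = ⋃ N ∈ G, ThickSubmodule.carrier N)) ↔
      (∃ c : ThickSubmodule A → ThickSubmodule A, Extensive A c ∧ OrderPreserving A c ∧
        Idempotent A c ∧ FiniteType A c ∧ 𝔉 = {N : ThickSubmodule A | c N = N})) ∧
    (((∀ G : Set (ThickSubmodule A), G ⊆ 𝔉 → G.Nonempty →
        ∃ F ∈ 𝔉, F.carrier = ⋂ N ∈ G, ThickSubmodule.carrier N) ∧
      (∀ G : Set (ThickSubmodule A), G ⊆ 𝔉 → G.Nonempty →
        (∀ N₁ ∈ G, ∀ N₂ ∈ G, ∃ N₃ ∈ G,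
          ThickSubmodule.carrier N₁ ⊆ ThickSubmodule.carrier N₃ ∧
          ThickSubmodule.carrier N₂ ⊆ ThickSubmodule.carrier N₃) →
        ∃ F ∈ 𝔉, F.carrier = ⋃ N ∈ G, ThickSubmodule.carrier N)) →
      (IsSpectralSpace {N : ThickSubmodule A // N ∈ 𝔉} ∧
      TopologicalSpace.IsTopologicalBasis
        (Set.range fun m : M =>
          (Subtype.val ⁻¹' U A m : Set {N : ThickSubmodule A // N ∈ 𝔉})) ∧
      (∀ m : M, IsCompact (Subtype.val ⁻¹' U A m : Set {N : ThickSubmodule A // N ∈ 𝔉})))) := by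
  classical
  constructor
  · constructor
    · rintro ⟨ha, hb⟩
      refine ⟨cOp A 𝔉, fun N => le_cOp A 𝔉 N, fun N N' h => cOp_mono A 𝔉 h, ?_, ?_, ?_⟩
      · -- Idempotent
        intro N
        exact tsm_ext A (Set.Subset.antisymm
          (cOp_le A (cOp_mem A 𝔉 hM ha N) subset_rfl) (le_cOp A 𝔉 _))
      · -- FiniteType
        intro N
        apply Set.Subset.antisymm
        · set G : Set (ThickSubmodule A) :=
            (fun n => cOp A 𝔉 (genSub A {n})) '' N.carrier with hGdef
          have hG𝔉 : G ⊆ 𝔉 := by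
            rintro _ ⟨n, hn, rfl⟩
            exact cOp_mem A 𝔉 hM ha _
          have hGne : G.Nonempty := ⟨_, ⟨0, N.zero_mem, rfl⟩⟩
          have hGdir : ∀ N₁ ∈ G, ∀ N₂ ∈ G, ∃ N₃ ∈ G,
              N₁.carrier ⊆ N₃.carrier ∧ N₂.carrier ⊆ N₃.carrier := by
            rintro _ ⟨n₁, h₁, rfl⟩ _ ⟨n₂, h₂, rfl⟩
            have hb12 : (n₁ ⊞ n₂) ∈ N.carrier := (N.biprod_mem_iff n₁ n₂).2 ⟨h₁, h₂⟩
            have hmem : (n₁ ⊞ n₂) ∈ (genSub A {n₁ ⊞ n₂}).carrier :=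
              subset_genSub A {n₁ ⊞ n₂} rfl
            obtain ⟨hm1, hm2⟩ := ((genSub A {n₁ ⊞ n₂}).biprod_mem_iff n₁ n₂).1 hmem
            exact ⟨_, ⟨n₁ ⊞ n₂, hb12, rfl⟩,
              cOp_mono A 𝔉 (genSub_subset A (Set.singleton_subset_iff.2 hm1)),
              cOp_mono A 𝔉 (genSub_subset A (Set.singleton_subset_iff.2 hm2))⟩
          obtain ⟨F, hF𝔉, hFcar⟩ := hb G hG𝔉 hGne hGdir
          have hcar2 : F.carrier = ⋃ n ∈ N.carrier, (cOp A 𝔉 (genSub A {n})).carrier := by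
            rw [hFcar, hGdef, Set.biUnion_image]
          have hNF : N.carrier ⊆ F.carrier := by
            intro n hn
            rw [hcar2]
            exact Set.mem_biUnion hn (le_cOp A 𝔉 _ (subset_genSub A {n} rfl))
          have hle := cOp_le A hF𝔉 hNF
          rwa [hcar2] at hle
        · intro x hx
          obtain ⟨n, hn, hx⟩ := Set.mem_iUnion₂.1 hx
          exact cOp_mono A 𝔉 (genSub_subset A (Set.singleton_subset_iff.2 hn)) hx
      · -- fixed points
        ext N
        simp only [Set.mem_setOf_eq]
        constructor
        · intro hN
          exact tsm_ext A (Set.Subset.antisymm (cOp_le A hN subset_rfl) (le_cOp A 𝔉 N))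
        · intro h
          rw [← h]
          exact cOp_mem A 𝔉 hM ha N
    · rintro ⟨c, hext, hmono, hidem, hft, hfix⟩
      constructor
      · intro G hG hne
        refine ⟨interSub A G, ?_, rfl⟩
        rw [hfix]
        show c (interSub A G) = interSub A G
        apply tsm_ext
        apply Set.Subset.antisymm
        · intro x hx
          simp only [interSub, Set.mem_iInter]
          intro N hN
          have hcN : c N = N := by
            have h2 := hG hN
            rw [hfix] at h2
            exact h2
          have hsub : (interSub A G).carrier ⊆ N.carrier := by
            intro y hy
            simp only [interSub, Set.mem_iInter] at hy
            exact hy N hN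
          have h3 := hmono _ _ hsub hx
          rwa [hcN] at h3
        · exact hext _
      · intro G hG hne hdir
        refine ⟨unionSub A G hne hdir, ?_, rfl⟩
        rw [hfix]
        show c (unionSub A G hne hdir) = unionSub A G hne hdir
        apply tsm_ext
        apply Set.Subset.antisymm
        · rw [hft]
          intro x hx
          obtain ⟨n, hn, hx⟩ := Set.mem_iUnion₂.1 hx
          obtain ⟨N, hN, hn⟩ := Set.mem_iUnion₂.1 hn
          have h1 : (genSub A {n}).carrier ⊆ N.carrier :=
            genSub_subset A (Set.singleton_subset_iff.2 hn)
          have hcN : c N = N := by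
            have h2 := hG hN
            rw [hfix] at h2
            exact h2
          have h3 := hmono _ _ h1 hx
          rw [hcN] at h3
          exact Set.mem_biUnion hN h3
        · exact hext _
  · rintro ⟨ha, hb⟩
    have hbasis := basis_lemma A 𝔉
    have hcomp := compact_lemma A 𝔉 hM ha
    refine ⟨⟨?_, ?_, ?_, ?_, ?_⟩, hbasis, hcomp⟩
    · -- CompactSpace
      refine ⟨?_⟩
      have huniv : (Set.univ : Set {N : ThickSubmodule A // N ∈ 𝔉}) =
          Subtype.val ⁻¹' U A 0 :=
        (Set.eq_univ_of_forall fun x => x.1.zero_mem).symm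
      rw [huniv]
      exact hcomp 0
    · -- T0
      refine ⟨fun x y h => ?_⟩
      apply Subtype.ext
      apply tsm_ext
      ext m
      exact (inseparable_iff_forall_isOpen.1 h) _ (hbasis.isOpen ⟨m, rfl⟩)
    · -- QuasiSober
      refine ⟨fun {Z} hZirr hZcl => ?_⟩
      obtain ⟨x₀, hx₀⟩ := hZirr.1
      set W : Set M := ⋃ N ∈ Z,
        ThickSubmodule.carrier ((N : {N : ThickSubmodule A // N ∈ 𝔉}) : ThickSubmodule A)
        with hW
      have h0W : (0 : M) ∈ W := Set.mem_biUnion hx₀ x₀.1.zero_mem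
      set G : Set (ThickSubmodule A) := (fun m => cOp A 𝔉 (genSub A {m})) '' W with hG
      have hG𝔉 : G ⊆ 𝔉 := by
        rintro _ ⟨m, hm, rfl⟩
        exact cOp_mem A 𝔉 hM ha _
      have hGne : G.Nonempty := ⟨_, ⟨0, h0W, rfl⟩⟩
      have hGdir : ∀ N₁ ∈ G, ∀ N₂ ∈ G, ∃ N₃ ∈ G,
          N₁.carrier ⊆ N₃.carrier ∧ N₂.carrier ⊆ N₃.carrier := by
        rintro _ ⟨m₁, hm₁, rfl⟩ _ ⟨m₂, hm₂, rfl⟩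
        obtain ⟨N₁, hN₁, hm₁'⟩ := Set.mem_iUnion₂.1 hm₁
        obtain ⟨N₂, hN₂, hm₂'⟩ := Set.mem_iUnion₂.1 hm₂
        obtain ⟨N, hNZ, hNm₁, hNm₂⟩ := hZirr.2 _ _ (hbasis.isOpen ⟨m₁, rfl⟩)
          (hbasis.isOpen ⟨m₂, rfl⟩) ⟨N₁, hN₁, hm₁'⟩ ⟨N₂, hN₂, hm₂'⟩
        have hb12 : (m₁ ⊞ m₂) ∈ N.1.carrier := (N.1.biprod_mem_iff m₁ m₂).2 ⟨hNm₁, hNm₂⟩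
        have hm₃W : (m₁ ⊞ m₂) ∈ W := Set.mem_biUnion hNZ hb12
        have hmem : (m₁ ⊞ m₂) ∈ (genSub A {m₁ ⊞ m₂}).carrier :=
          subset_genSub A {m₁ ⊞ m₂} rfl
        obtain ⟨hg1, hg2⟩ := ((genSub A {m₁ ⊞ m₂}).biprod_mem_iff m₁ m₂).1 hmem
        exact ⟨_, ⟨m₁ ⊞ m₂, hm₃W, rfl⟩,
          cOp_mono A 𝔉 (genSub_subset A (Set.singleton_subset_iff.2 hg1)),
          cOp_mono A 𝔉 (genSub_subset A (Set.singleton_subset_iff.2 hg2))⟩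
      obtain ⟨ξ, hξ𝔉, hξcar⟩ := hb G hG𝔉 hGne hGdir
      have hξW : ξ.carrier = W := by
        rw [hξcar, hG, Set.biUnion_image]
        apply Set.Subset.antisymm
        · intro x hx
          obtain ⟨m, hm, hx⟩ := Set.mem_iUnion₂.1 hx
          obtain ⟨N, hNZ, hmN⟩ := Set.mem_iUnion₂.1 hm
          have hsub : (cOp A 𝔉 (genSub A {m})).carrier ⊆ N.1.carrier :=
            cOp_le A N.2 (genSub_subset A (Set.singleton_subset_iff.2 hmN))
          exact Set.mem_biUnion hNZ (hsub hx)
        · intro m hm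
          exact Set.mem_biUnion hm (le_cOp A 𝔉 _ (subset_genSub A {m} rfl))
      have hξZ : (⟨ξ, hξ𝔉⟩ : {N : ThickSubmodule A // N ∈ 𝔉}) ∈ Z := by
        by_contra hcon
        obtain ⟨v, ⟨m, rfl⟩, hxv, hvsub⟩ :=
          hbasis.exists_subset_of_mem_open (show _ ∈ Zᶜ from hcon) hZcl.isOpen_compl
        have hmW : m ∈ W := hξW ▸ hxv
        obtain ⟨N, hNZ, hmN⟩ := Set.mem_iUnion₂.1 hmW
        exact (hvsub hmN) hNZ
      refine ⟨⟨ξ, hξ𝔉⟩, ?_⟩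
      show closure {(⟨ξ, hξ𝔉⟩ : {N : ThickSubmodule A // N ∈ 𝔉})} = Z
      apply Set.Subset.antisymm
      · exact closure_minimal (Set.singleton_subset_iff.2 hξZ) hZcl
      · intro N hNZ
        rw [hbasis.mem_closure_iff]
        rintro _ ⟨m, rfl⟩ hNm
        refine ⟨⟨ξ, hξ𝔉⟩, ?_, rfl⟩
        show m ∈ ξ.carrier
        rw [hξW]
        exact Set.mem_biUnion hNZ hNm
    · -- basis of compact opens
      refine TopologicalSpace.isTopologicalBasis_of_isOpen_of_nhds (fun u hu => hu.1) ?_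
      intro a u hau hu
      obtain ⟨v, ⟨m, rfl⟩, hav, hvu⟩ := hbasis.exists_subset_of_mem_open hau hu
      exact ⟨_, ⟨hbasis.isOpen ⟨m, rfl⟩, hcomp m⟩, hav, hvu⟩
    · -- intersections of compact opens
      intro s t hso hsc hto htc
      obtain ⟨Ls, hLs⟩ := finrep_lemma A 𝔉 hso hsc
      obtain ⟨Lt, hLt⟩ := finrep_lemma A 𝔉 hto htc
      have hint : s ∩ t = ⋃ m₁ ∈ Ls, ⋃ m₂ ∈ Lt,
          (Subtype.val ⁻¹' U A (m₁ ⊞ m₂) : Set {N : ThickSubmodule A // N ∈ 𝔉}) := by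
        rw [hLs, hLt]
        ext x
        simp only [Set.mem_inter_iff, Set.mem_iUnion, exists_prop]
        constructor
        · rintro ⟨⟨m₁, hm₁, hx₁⟩, ⟨m₂, hm₂, hx₂⟩⟩
          exact ⟨m₁, hm₁, m₂, hm₂, (x.1.biprod_mem_iff m₁ m₂).2 ⟨hx₁, hx₂⟩⟩
        · rintro ⟨m₁, hm₁, m₂, hm₂, hx⟩
          obtain ⟨h1, h2⟩ := (x.1.biprod_mem_iff m₁ m₂).1 hx
          exact ⟨⟨m₁, hm₁, h1⟩, ⟨m₂, hm₂, h2⟩⟩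
      rw [hint]
      exact Ls.isCompact_biUnion fun m₁ _ => Lt.isCompact_biUnion fun m₂ _ => hcomp _
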